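/- For every extended context-free hedge automaton A with collapsing transitions over an unranked alphabet Σ, there exists a context-free hedge automaton A' without collapsing transitions such that the set of terms (hedges of length one) accepted by A' equals the set of terms accepted by A. -/

import Mathlib

/-- Unranked terms over an alphabet `α`. -/
inductive UTerm (α : Type) : Type
  | node : α → List (UTerm α) → UTerm α

/-- A context-free hedge automaton extended with collapsing transitions:
ordinary transitions `a(L) → q` and collapsing transitions `L → q`, all with
context-free horizontal languages `L ⊆ Q*`. -/
structure ECFHA (α Q : Type) where
  final : Set Q
  trans : List (α × Language Q × Q)
  collapse : List (Language Q × Q)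
  cf : ∀ r ∈ trans, r.2.1.IsContextFree
  cfCollapse : ∀ r ∈ collapse, r.1.IsContextFree

/-- A state viewed as a leaf of a mixed hedge over `Σ ∪ Q`. -/
def stLeaf {α Q : Type} (q : Q) : UTerm (α ⊕ Q) := UTerm.node (Sum.inr q) []

mutual
  /-- Embedding of a term over `Σ` into mixed terms over `Σ ∪ Q`. -/
  def embedT {α Q : Type} : UTerm α → UTerm (α ⊕ Q)
    | UTerm.node a ts => UTerm.node (Sum.inl a) (embedH ts)
  /-- Embedding of hedges. -/
  def embedH {α Q : Type} : List (UTerm α) → List (UTerm (α ⊕ Q))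
    | [] => []
    | t :: ts => embedT t :: embedH ts
end

/-- The move relation of an extended CF-HA on mixed hedges over `Σ ∪ Q`:
an ordinary transition rewrites `a(q₁…qₙ)` with `q₁…qₙ ∈ L` into `q`,
a collapsing transition rewrites a consecutive subhedge `q₁…qₙ ∈ L` into `q`,
and steps may be applied in any context. -/
inductive ECFHA.Move {α Q : Type} (A : ECFHA α Q) :
    List (UTerm (α ⊕ Q)) → List (UTerm (α ⊕ Q)) → Prop
  | trans {a : α} {L : Language Q} {q : Q} {qs : List Q} :
      (a, L, q) ∈ A.trans → qs ∈ L →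
      A.Move [UTerm.node (Sum.inl a) (qs.map stLeaf)] [stLeaf q]
  | collapse {L : Language Q} {q : Q} {qs : List Q} :
      (L, q) ∈ A.collapse → qs ∈ L →
      A.Move (qs.map stLeaf) [stLeaf q]
  | context {u v h h' : List (UTerm (α ⊕ Q))} :
      A.Move h h' → A.Move (u ++ h ++ v) (u ++ h' ++ v)
  | under {f : α ⊕ Q} {h h' : List (UTerm (α ⊕ Q))} :
      A.Move h h' → A.Move [UTerm.node f h] [UTerm.node f h']

/-- The set of terms (hedges of length one) accepted by an extended CF-HA. -/
def ECFHA.termLang {α Q : Type} (A : ECFHA α Q) : Set (UTerm α) :=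
  { t | ∃ q ∈ A.final, Relation.ReflTransGen A.Move [embedT t] [stLeaf q] }

namespace ECFHA

variable {α Q : Type}

/-- Bottom-up evaluation relation of an extended CF-HA: a mixed hedge evaluates
to a word of states. -/
inductive EvalH (A : ECFHA α Q) : List (UTerm (α ⊕ Q)) → List Q → Prop
  | empty : EvalH A [] []
  | leaf (q : Q) : EvalH A [stLeaf q] [q]
  | app {h₁ h₂ w₁ w₂} : EvalH A h₁ w₁ → EvalH A h₂ w₂ → EvalH A (h₁ ++ h₂) (w₁ ++ w₂)
  | node {a L q h w} : (a, L, q) ∈ A.trans → EvalH A h w → w ∈ L →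
      EvalH A [UTerm.node (Sum.inl a) h] [q]
  | coll {L q h w} : (L, q) ∈ A.collapse → EvalH A h w → w ∈ L → EvalH A h [q]

variable {A : ECFHA α Q}

lemma evalH_refl : ∀ w : List Q, A.EvalH (w.map stLeaf) w
  | [] => EvalH.empty
  | q :: w => EvalH.app (EvalH.leaf q) (evalH_refl w)

lemma stLeaf_injective : Function.Injective (stLeaf : Q → UTerm (α ⊕ Q)) := by
  intro a b hab
  simpa [stLeaf] using hab

/-- Output words of evaluations can be split, splitting the hedge. -/
lemma EvalH.splitOut {h : List (UTerm (α ⊕ Q))} {w : List Q} (hw : A.EvalH h w) :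
    ∀ u v, w = u ++ v → ∃ h₁ h₂, h = h₁ ++ h₂ ∧ A.EvalH h₁ u ∧ A.EvalH h₂ v := by
  induction hw with
  | empty =>
    intro u v huv
    obtain ⟨rfl, rfl⟩ := List.append_eq_nil_iff.mp huv.symm
    exact ⟨[], [], rfl, EvalH.empty, EvalH.empty⟩
  | leaf q =>
    intro u v huv
    match u, huv with
    | [], huv =>
      have hv : v = [q] := by simpa using huv.symm
      subst hv
      exact ⟨[], [stLeaf q], rfl, EvalH.empty, EvalH.leaf q⟩
    | [x], huv =>
      obtain ⟨rfl, hv⟩ := List.cons_eq_cons.mp huv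
      have hv' : v = [] := by simpa using hv.symm
      subst hv'
      exact ⟨[stLeaf q], [], by simp, EvalH.leaf q, EvalH.empty⟩
  | app hw₁ hw₂ ih₁ ih₂ =>
    rename_i h₁ h₂ w₁ w₂
    intro u v huv
    rcases List.append_eq_append_iff.mp huv with ⟨c, hc₁, hc₂⟩ | ⟨c, hc₁, hc₂⟩
    · -- u = w₁ ++ c, w₂ = c ++ v
      obtain ⟨h₂₁, h₂₂, rfl, hcw, hvw⟩ := ih₂ c v hc₂
      exact ⟨h₁ ++ h₂₁, h₂₂, by simp, by rw [hc₁]; exact EvalH.app hw₁ hcw, hvw⟩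
    · -- w₁ = u ++ c, v = c ++ w₂
      obtain ⟨h₁₁, h₁₂, rfl, huw, hcw⟩ := ih₁ u c hc₁
      exact ⟨h₁₁, h₁₂ ++ h₂, by simp, huw, by rw [hc₂]; exact EvalH.app hcw hw₂⟩
  | node hmem hw hL ih =>
    rename_i a L q h w
    intro u v huv
    match u, huv with
    | [], huv =>
      have hv : v = [q] := by simpa using huv.symm
      subst hv
      exact ⟨[], _, rfl, EvalH.empty, EvalH.node hmem hw hL⟩
    | [x], huv =>
      obtain ⟨rfl, hv⟩ := List.cons_eq_cons.mp huv
      have hv' : v = [] := by simpa using hv.symm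
      subst hv'
      exact ⟨_, [], by simp, EvalH.node hmem hw hL, EvalH.empty⟩
  | coll hmem hw hL ih =>
    rename_i L q h w
    intro u v huv
    match u, huv with
    | [], huv =>
      have hv : v = [q] := by simpa using huv.symm
      subst hv
      exact ⟨[], _, rfl, EvalH.empty, EvalH.coll hmem hw hL⟩
    | [x], huv =>
      obtain ⟨rfl, hv⟩ := List.cons_eq_cons.mp huv
      have hv' : v = [] := by simpa using hv.symm
      subst hv'
      exact ⟨_, [], by simp, EvalH.coll hmem hw hL, EvalH.empty⟩

/-- Input hedges can be split, up to a residual collapse evaluation. -/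
lemma EvalH.splitIn {h : List (UTerm (α ⊕ Q))} {w : List Q} (hw : A.EvalH h w) :
    ∀ k₁ k₂, h = k₁ ++ k₂ → ∃ w₁ w₂, A.EvalH k₁ w₁ ∧ A.EvalH k₂ w₂ ∧
      A.EvalH ((w₁ ++ w₂).map stLeaf) w := by
  induction hw with
  | empty =>
    intro k₁ k₂ hk
    obtain ⟨rfl, rfl⟩ := List.append_eq_nil_iff.mp hk.symm
    exact ⟨[], [], EvalH.empty, EvalH.empty, EvalH.empty⟩
  | leaf q =>
    intro k₁ k₂ hk
    match k₁, hk with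
    | [], hk =>
      have hk' : k₂ = [stLeaf q] := by simpa using hk.symm
      subst hk'
      exact ⟨[], [q], EvalH.empty, EvalH.leaf q, EvalH.leaf q⟩
    | [x], hk =>
      obtain ⟨rfl, hk₂⟩ := List.cons_eq_cons.mp hk
      have hk' : k₂ = [] := by simpa using hk₂.symm
      subst hk'
      exact ⟨[q], [], EvalH.leaf q, EvalH.empty, by simpa using EvalH.leaf q⟩
  | app hw₁ hw₂ ih₁ ih₂ =>
    rename_i h₁ h₂ w₁ w₂
    intro k₁ k₂ hk
    rcases List.append_eq_append_iff.mp hk with ⟨c, hc₁, hc₂⟩ | ⟨c, hc₁, hc₂⟩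
    · -- k₁ = h₁ ++ c, h₂ = c ++ k₂
      obtain ⟨wc, wd, hcw, hdw, hres⟩ := ih₂ c k₂ hc₂
      refine ⟨w₁ ++ wc, wd, by rw [hc₁]; exact EvalH.app hw₁ hcw, hdw, ?_⟩
      have : A.EvalH (w₁.map stLeaf ++ (wc ++ wd).map stLeaf) (w₁ ++ w₂) :=
        EvalH.app (evalH_refl w₁) hres
      simpa [List.map_append, List.append_assoc] using this
    · -- h₁ = k₁ ++ c, k₂ = c ++ h₂
      obtain ⟨wu, wc, huw, hcw, hres⟩ := ih₁ k₁ c hc₁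
      refine ⟨wu, wc ++ w₂, huw, by rw [hc₂]; exact EvalH.app hcw hw₂, ?_⟩
      have : A.EvalH ((wu ++ wc).map stLeaf ++ w₂.map stLeaf) (w₁ ++ w₂) :=
        EvalH.app hres (evalH_refl w₂)
      simpa [List.map_append, List.append_assoc] using this
  | node hmem hw hL ih =>
    rename_i a L q h w
    intro k₁ k₂ hk
    match k₁, hk with
    | [], hk =>
      have hk' : k₂ = [UTerm.node (Sum.inl a) h] := by simpa using hk.symm
      subst hk'
      exact ⟨[], [q], EvalH.empty, EvalH.node hmem hw hL, EvalH.leaf q⟩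
    | [x], hk =>
      obtain ⟨rfl, hk₂⟩ := List.cons_eq_cons.mp hk
      have hk' : k₂ = [] := by simpa using hk₂.symm
      subst hk'
      exact ⟨[q], [], EvalH.node hmem hw hL, EvalH.empty, by simpa using EvalH.leaf q⟩
  | coll hmem hw hL ih =>
    intro k₁ k₂ hk
    obtain ⟨w₁, w₂, h₁, h₂, hres⟩ := ih k₁ k₂ hk
    exact ⟨w₁, w₂, h₁, h₂, EvalH.coll hmem hres hL⟩

/-- Vertical composition: evaluation through an intermediate state word. -/
lemma EvalH.comp {k : List (UTerm (α ⊕ Q))} {w : List Q} (hk : A.EvalH k w) :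
    ∀ (h : List (UTerm (α ⊕ Q))) (w' : List Q), k = w'.map stLeaf → A.EvalH h w' →
      A.EvalH h w := by
  induction hk with
  | empty =>
    intro h w' hmap hw'
    rw [show w' = [] from by simpa using hmap.symm] at hw'
    exact hw'
  | leaf q =>
    intro h w' hmap hw'
    match w', hmap with
    | [x], hmap =>
      have : x = q := stLeaf_injective (by simpa using hmap.symm)
      subst this
      exact hw'
  | app hk₁ hk₂ ih₁ ih₂ =>
    rename_i k₁ k₂ w₁ w₂
    intro h w' hmap hw'
    obtain ⟨w'₁, w'₂, rfl, hm₁, hm₂⟩ := List.map_eq_append_iff.mp hmap.symm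
    obtain ⟨h₁, h₂, rfl, hw'₁, hw'₂⟩ := hw'.splitOut w'₁ w'₂ rfl
    exact EvalH.app (ih₁ h₁ w'₁ hm₁.symm hw'₁) (ih₂ h₂ w'₂ hm₂.symm hw'₂)
  | node hmem hk hL ih =>
    intro h w' hmap hw'
    exfalso
    match w', hmap with
    | [x], hmap => simp [stLeaf] at hmap
  | coll hmem hk hL ih =>
    intro h w' hmap hw'
    exact EvalH.coll hmem (ih h w' hmap hw') hL

end ECFHA

namespace ECFHA

variable {α Q : Type} {A : ECFHA α Q}

lemma Move.ne_nil {h h' : List (UTerm (α ⊕ Q))} (hm : A.Move h h') : h' ≠ [] := by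
  induction hm with
  | trans _ _ => simp
  | collapse _ _ => simp
  | context _ ih => simp [ih]
  | under _ _ => simp

lemma rtg_context {h h' u v : List (UTerm (α ⊕ Q))}
    (hm : Relation.ReflTransGen A.Move h h') :
    Relation.ReflTransGen A.Move (u ++ h ++ v) (u ++ h' ++ v) :=
  Relation.ReflTransGen.lift (fun x => u ++ x ++ v) (fun _ _ hab => Move.context hab) _ _ hm

lemma rtg_under {f : α ⊕ Q} {h h' : List (UTerm (α ⊕ Q))}
    (hm : Relation.ReflTransGen A.Move h h') :
    Relation.ReflTransGen A.Move [UTerm.node f h] [UTerm.node f h'] :=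
  Relation.ReflTransGen.lift (fun x => [UTerm.node f x]) (fun _ _ hab => Move.under hab) _ _ hm

/-- Soundness: evaluation implies reduction. -/
lemma EvalH.toMoves {h : List (UTerm (α ⊕ Q))} {w : List Q} (hw : A.EvalH h w) :
    Relation.ReflTransGen A.Move h (w.map stLeaf) := by
  induction hw with
  | empty => exact Relation.ReflTransGen.refl
  | leaf q => exact Relation.ReflTransGen.refl
  | app hw₁ hw₂ ih₁ ih₂ =>
    rename_i h₁ h₂ w₁ w₂
    have step₁ : Relation.ReflTransGen A.Move (h₁ ++ h₂) (w₁.map stLeaf ++ h₂) := by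
      have := rtg_context (u := ([] : List (UTerm (α ⊕ Q)))) (v := h₂) ih₁
      simpa using this
    have step₂ : Relation.ReflTransGen A.Move (w₁.map stLeaf ++ h₂)
        (w₁.map stLeaf ++ w₂.map stLeaf) := by
      have := rtg_context (u := w₁.map stLeaf) (v := ([] : List (UTerm (α ⊕ Q)))) ih₂
      simpa using this
    rw [List.map_append]
    exact step₁.trans step₂
  | node hmem hw hL ih =>
    rename_i a L q h w
    have step₁ : Relation.ReflTransGen A.Move [UTerm.node (Sum.inl a) h]
        [UTerm.node (Sum.inl a) (w.map stLeaf)] := rtg_under ih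
    exact step₁.trans (Relation.ReflTransGen.single (Move.trans hmem hL))
  | coll hmem hw hL ih =>
    exact ih.trans (Relation.ReflTransGen.single (Move.collapse hmem hL))

/-- Backward simulation: a single move preserves evaluation backwards. -/
lemma Move.evalH {h h' : List (UTerm (α ⊕ Q))} (hm : A.Move h h') :
    ∀ w : List Q, A.EvalH h' w → A.EvalH h w := by
  induction hm with
  | trans hmem hL =>
    rename_i a L q qs
    intro w hw
    exact hw.comp _ [q] rfl (EvalH.node hmem (evalH_refl qs) hL)
  | collapse hmem hL =>
    rename_i L q qs
    intro w hw
    exact hw.comp _ [q] rfl (EvalH.coll hmem (evalH_refl qs) hL)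
  | context hm ih =>
    rename_i u v g g'
    intro w hw
    obtain ⟨w₁, wr, hu, hrest, hcomp₁⟩ := hw.splitIn u (g' ++ v) (List.append_assoc u g' v)
    obtain ⟨w₂, w₃, hg', hv, hcomp₂⟩ := hrest.splitIn g' v rfl
    have hg : A.EvalH g w₂ := ih w₂ hg'
    have base : A.EvalH (u ++ g ++ v) (w₁ ++ (w₂ ++ w₃)) := by
      have := EvalH.app hu (EvalH.app hg hv)
      simpa [List.append_assoc] using this
    have mid : A.EvalH ((w₁ ++ (w₂ ++ w₃)).map stLeaf) (w₁ ++ wr) := by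
      rw [List.map_append]
      exact EvalH.app (evalH_refl w₁) hcomp₂
    have base' : A.EvalH (u ++ g ++ v) (w₁ ++ wr) := mid.comp _ _ rfl base
    exact hcomp₁.comp _ _ rfl base'
  | under hm ih =>
    rename_i f g g'
    intro w hw
    have key : ∀ k w, A.EvalH k w → k = [UTerm.node f g'] → A.EvalH [UTerm.node f g] w := by
      intro k w hkw
      induction hkw with
      | empty => intro hk; exact absurd hk (by simp)
      | leaf q =>
        intro hk
        obtain ⟨hf, hg'⟩ : (Sum.inr q : α ⊕ Q) = f ∧ ([] : List (UTerm (α ⊕ Q))) = g' := by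
          simpa [stLeaf, List.cons_eq_cons] using hk
        exact absurd hg'.symm hm.ne_nil
      | app hw₁ hw₂ ih₁ ih₂ =>
        rename_i h₁ h₂ w₁ w₂
        intro hk
        rcases List.append_eq_cons_iff.mp hk with ⟨h₁nil, h₂eq⟩ | ⟨a', ha, hl⟩
        · subst h₁nil
          exact EvalH.app hw₁ (ih₂ h₂eq)
        · obtain ⟨rfl, rfl⟩ : a' = [] ∧ h₂ = [] := by
            constructor
            · exact (List.append_eq_nil_iff.mp hl.symm).1
            · exact (List.append_eq_nil_iff.mp hl.symm).2
          have h₁eq : h₁ = [UTerm.node f g'] := by rw [ha]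
          have := EvalH.app (ih₁ h₁eq) hw₂
          simpa using this
      | node hmem' hwc hL' ihn =>
        intro hk
        obtain ⟨hf, -⟩ := List.cons_eq_cons.mp hk
        injection hf with hf1 hf2
        subst hf1
        subst hf2
        exact EvalH.node hmem' (ih _ hwc) hL'
      | coll hmem' hwc hL' ihc =>
        intro hk
        exact EvalH.coll hmem' (ihc hk) hL'
    exact key _ w hw rfl

end ECFHA

namespace ECFHA
/-- The collapse closure of a horizontal language. -/
def up {α Q : Type} (A : ECFHA α Q) (L : Language Q) : Language Q :=
  { u | ∃ w ∈ L, A.EvalH (u.map stLeaf) w }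
end ECFHA

namespace ECFHA

section Lift

variable {T N N' : Type}

/-- Lift a symbol, sending terminals to designated nonterminals. -/
def liftSymbol (fT : T → N') (fN : N → N') : Symbol T N → Symbol T N'
  | .terminal t => .nonterminal (fT t)
  | .nonterminal n => .nonterminal (fN n)

lemma liftSymbol_injective {fT : T → N'} {fN : N → N'} (hT : Function.Injective fT)
    (hN : Function.Injective fN) (hd : ∀ t n, fT t ≠ fN n) :
    Function.Injective (liftSymbol fT fN) := by
  intro s₁ s₂ h
  match s₁, s₂, h with
  | .terminal t₁, .terminal t₂, h =>
    simp only [liftSymbol, Symbol.nonterminal.injEq] at h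
    rw [hT h]
  | .terminal t₁, .nonterminal n₂, h =>
    simp only [liftSymbol, Symbol.nonterminal.injEq] at h
    exact absurd h (hd _ _)
  | .nonterminal n₁, .terminal t₂, h =>
    simp only [liftSymbol, Symbol.nonterminal.injEq] at h
    exact absurd h.symm (hd _ _)
  | .nonterminal n₁, .nonterminal n₂, h =>
    simp only [liftSymbol, Symbol.nonterminal.injEq] at h
    rw [hN h]

/-- Lift a context-free rule along symbol lifting. -/
def liftRule (fT : T → N') (fN : N → N') (r : ContextFreeRule T N) : ContextFreeRule T N' :=
  ⟨fN r.input, r.output.map (liftSymbol fT fN)⟩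

lemma liftRule_injective {fT : T → N'} {fN : N → N'} (hT : Function.Injective fT)
    (hN : Function.Injective fN) (hd : ∀ t n, fT t ≠ fN n) :
    Function.Injective (liftRule fT fN) := by
  intro r₁ r₂ h
  obtain ⟨h₁, h₂⟩ := ContextFreeRule.ext_iff.mp h
  exact ContextFreeRule.ext (hN h₁)
    (List.map_injective_iff.mpr (liftSymbol_injective hT hN hd) h₂)

/-- Lifting preserves derivations when all lifted rules are present. -/
lemma lift_derives {g g' : ContextFreeGrammar T} (fT : T → g'.NT) (fN : g.NT → g'.NT)
    (hr : ∀ r ∈ g.rules, liftRule fT fN r ∈ g'.rules) {u v : List (Symbol T g.NT)}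
    (h : g.Derives u v) :
    g'.Derives (u.map (liftSymbol fT fN)) (v.map (liftSymbol fT fN)) := by
  refine Relation.ReflTransGen.lift (List.map (liftSymbol fT fN)) ?_ _ _ h
  rintro x y ⟨r, hrmem, hrw⟩
  obtain ⟨p, s, rfl, rfl⟩ := hrw.exists_parts
  refine ⟨liftRule fT fN r, hr r hrmem, ?_⟩
  have := ContextFreeRule.rewrites_of_exists_parts (liftRule fT fN r)
    (p.map (liftSymbol fT fN)) (s.map (liftSymbol fT fN))
  simpa [liftRule, liftSymbol, List.map_append] using this

end Lift

end ECFHA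

namespace ECFHA

section UpGrammar

variable {α Q : Type} (A : ECFHA α Q) [Fintype Q] (g₀ : ContextFreeGrammar Q)
  (G : Fin A.collapse.length → ContextFreeGrammar Q)

/-- Nonterminals of the grammar for the collapse closure. -/
abbrev UpNT : Type := g₀.NT ⊕ (Q ⊕ (Σ i : Fin A.collapse.length, (G i).NT))

/-- The `Q`-copy nonterminal embedding. -/
def ntQ (q : Q) : UpNT A g₀ G := Sum.inr (Sum.inl q)

lemma ntQ_injective : Function.Injective (ntQ A g₀ G) := by
  intro a b h
  simpa [ntQ] using h

open scoped Classical in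
/-- The grammar for the collapse closure of `g₀.language`. -/
noncomputable def upGrammar : ContextFreeGrammar Q where
  NT := UpNT A g₀ G
  initial := Sum.inl g₀.initial
  rules :=
    (g₀.rules.map ⟨liftRule (ntQ A g₀ G) Sum.inl,
        liftRule_injective (ntQ_injective A g₀ G) Sum.inl_injective (fun t n => by simp [ntQ])⟩)
    ∪ ((Finset.univ : Finset Q).map ⟨fun q => ⟨ntQ A g₀ G q, [Symbol.terminal q]⟩,
        fun a b h => ntQ_injective A g₀ G (ContextFreeRule.ext_iff.mp h).1⟩)
    ∪ ((Finset.univ : Finset (Fin A.collapse.length)).map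
        ⟨fun i => ⟨ntQ A g₀ G (A.collapse.get i).2,
            [Symbol.nonterminal (Sum.inr (Sum.inr ⟨i, (G i).initial⟩))]⟩,
          fun a b h => by
            have h2 := (ContextFreeRule.ext_iff.mp h).2
            simp only [List.cons.injEq, Symbol.nonterminal.injEq, Sum.inr.injEq,
              and_true] at h2
            exact congrArg Sigma.fst h2⟩)
    ∪ ((Finset.univ : Finset (Fin A.collapse.length)).biUnion
        (fun i => (G i).rules.map ⟨liftRule (ntQ A g₀ G) (fun n => Sum.inr (Sum.inr ⟨i, n⟩)),
          liftRule_injective (ntQ_injective A g₀ G)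
            (fun a b h => by simpa using h)
            (fun t n => by simp [ntQ])⟩))

/-- Semantics of symbols of the up-grammar. -/
def upM : Symbol Q (UpNT A g₀ G) → Language Q
  | .terminal q => {[q]}
  | .nonterminal (Sum.inl n) =>
      {u | ∃ w, g₀.Derives [Symbol.nonterminal n] (w.map Symbol.terminal) ∧
        A.EvalH (u.map stLeaf) w}
  | .nonterminal (Sum.inr (Sum.inl q)) => {u | A.EvalH (u.map stLeaf) [q]}
  | .nonterminal (Sum.inr (Sum.inr ⟨i, n⟩)) =>
      {u | ∃ w, (G i).Derives [Symbol.nonterminal n] (w.map Symbol.terminal) ∧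
        A.EvalH (u.map stLeaf) w}

/-- Semantics of symbol strings. -/
def upMstr (sf : List (Symbol Q (UpNT A g₀ G))) : Language Q :=
  (sf.map (upM A g₀ G)).prod

lemma upMstr_append (a b : List (Symbol Q (UpNT A g₀ G))) :
    upMstr A g₀ G (a ++ b) = upMstr A g₀ G a * upMstr A g₀ G b := by
  simp [upMstr, List.map_append, List.prod_append]

lemma upMstr_single (s : Symbol Q (UpNT A g₀ G)) :
    upMstr A g₀ G [s] = upM A g₀ G s := by
  simp [upMstr]

end UpGrammar

end ECFHA

namespace ECFHA

section UpGrammar2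

variable {α Q : Type} (A : ECFHA α Q) [Fintype Q] (g₀ : ContextFreeGrammar Q)
  (G : Fin A.collapse.length → ContextFreeGrammar Q)

lemma mem_rules₀ {r : ContextFreeRule Q g₀.NT} (hr : r ∈ g₀.rules) :
    liftRule (ntQ A g₀ G) Sum.inl r ∈ (upGrammar A g₀ G).rules := by
  classical
  unfold upGrammar
  simp only [Finset.mem_union, Finset.mem_map, Function.Embedding.coeFn_mk]
  exact Or.inl (Or.inl (Or.inl ⟨r, hr, rfl⟩))

lemma mem_rules₂ (q : Q) :
    (⟨ntQ A g₀ G q, [Symbol.terminal q]⟩ : ContextFreeRule Q (UpNT A g₀ G)) ∈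
      (upGrammar A g₀ G).rules := by
  classical
  unfold upGrammar
  simp only [Finset.mem_union, Finset.mem_map, Function.Embedding.coeFn_mk]
  exact Or.inl (Or.inl (Or.inr ⟨q, Finset.mem_univ q, rfl⟩))

lemma mem_rules₃ (i : Fin A.collapse.length) :
    (⟨ntQ A g₀ G (A.collapse.get i).2,
      [Symbol.nonterminal (Sum.inr (Sum.inr ⟨i, (G i).initial⟩))]⟩ :
        ContextFreeRule Q (UpNT A g₀ G)) ∈ (upGrammar A g₀ G).rules := by
  classical
  unfold upGrammar
  simp only [Finset.mem_union, Finset.mem_map, Function.Embedding.coeFn_mk]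
  exact Or.inl (Or.inr ⟨i, Finset.mem_univ i, rfl⟩)

lemma mem_rules₄ (i : Fin A.collapse.length) {r : ContextFreeRule Q (G i).NT}
    (hr : r ∈ (G i).rules) :
    liftRule (ntQ A g₀ G) (fun n => Sum.inr (Sum.inr ⟨i, n⟩)) r ∈
      (upGrammar A g₀ G).rules := by
  classical
  unfold upGrammar
  simp only [Finset.mem_union, Finset.mem_biUnion, Finset.mem_map,
    Function.Embedding.coeFn_mk]
  exact Or.inr ⟨i, Finset.mem_univ i, r, hr, rfl⟩

lemma upGrammar_derives_states
    (hG : ∀ i, (G i).language = (A.collapse.get i).1)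
    {k : List (UTerm (α ⊕ Q))} {w : List Q} (hkw : A.EvalH k w) :
    ∀ u : List Q, k = u.map stLeaf →
      (upGrammar A g₀ G).Derives
        (w.map (fun q => Symbol.nonterminal (ntQ A g₀ G q)))
        (u.map Symbol.terminal) := by
  induction hkw with
  | empty =>
    intro u hu
    rw [show u = [] from by simpa using hu.symm]
    exact Relation.ReflTransGen.refl
  | leaf q =>
    intro u hu
    cases u with
    | nil => simp at hu
    | cons x u' =>
      simp only [List.map_cons] at hu
      obtain ⟨h1, h2⟩ := List.cons_eq_cons.mp hu
      have hx : x = q := stLeaf_injective h1.symm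
      have hu' : u' = [] := by simpa using h2.symm
      subst hx; subst hu'
      exact (ContextFreeGrammar.Produces.single
        ⟨_, mem_rules₂ A g₀ G x, ContextFreeRule.Rewrites.input_output⟩)
  | app hw₁ hw₂ ih₁ ih₂ =>
    rename_i h₁ h₂ w₁ w₂
    intro u hu
    obtain ⟨u₁, u₂, rfl, hm₁, hm₂⟩ := List.map_eq_append_iff.mp hu.symm
    have d₁ := ih₁ u₁ hm₁.symm
    have d₂ := ih₂ u₂ hm₂.symm
    rw [List.map_append, List.map_append]
    exact (d₁.append_right _).trans (d₂.append_left _)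
  | node hmem hw hL ih =>
    intro u hu
    cases u with
    | nil => simp at hu
    | cons x u' =>
      simp only [List.map_cons] at hu
      obtain ⟨h1, -⟩ := List.cons_eq_cons.mp hu
      simp [stLeaf] at h1
  | coll hmem hw hL ih =>
    rename_i L' q' k' w'
    intro u hu
    obtain ⟨i, hi⟩ := List.mem_iff_get.mp hmem
    have hq' : (A.collapse.get i).2 = q' := by rw [hi]
    have step1 : (upGrammar A g₀ G).Produces
        [Symbol.nonterminal (ntQ A g₀ G q')]
        [Symbol.nonterminal (Sum.inr (Sum.inr ⟨i, (G i).initial⟩))] := by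
      refine ⟨_, mem_rules₃ A g₀ G i, ?_⟩
      rw [← hq']
      exact ContextFreeRule.Rewrites.input_output
    have hwlang : w' ∈ (G i).language := by
      rw [hG i, hi]; exact hL
    have d : (G i).Derives [Symbol.nonterminal (G i).initial]
        (w'.map Symbol.terminal) := hwlang
    have dlift := lift_derives (g' := upGrammar A g₀ G) (ntQ A g₀ G)
      (fun n => Sum.inr (Sum.inr ⟨i, n⟩)) (fun r hr => mem_rules₄ A g₀ G i hr) d
    simp only [List.map_map] at dlift
    exact (step1.trans_derives dlift).trans (ih u hu)

lemma up_mem_upGrammar {L : Language Q} (hg₀ : g₀.language = L)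
    (hG : ∀ i, (G i).language = (A.collapse.get i).1)
    {u : List Q} (hu : u ∈ A.up L) : u ∈ (upGrammar A g₀ G).language := by
  obtain ⟨w, hwL, hev⟩ := hu
  have hwlang : w ∈ g₀.language := by rw [hg₀]; exact hwL
  have d₀ : g₀.Derives [Symbol.nonterminal g₀.initial] (w.map Symbol.terminal) := hwlang
  have dlift := lift_derives (g' := upGrammar A g₀ G) (ntQ A g₀ G) Sum.inl
    (fun r hr => mem_rules₀ A g₀ G hr) d₀
  rw [ContextFreeGrammar.mem_language_iff]
  simp only [List.map_map] at dlift
  exact dlift.trans (upGrammar_derives_states A g₀ G hG hev u rfl)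

end UpGrammar2

end ECFHA

namespace ECFHA

section UpGrammar3

variable {α Q : Type} (A : ECFHA α Q) [Fintype Q] (g₀ : ContextFreeGrammar Q)
  (G : Fin A.collapse.length → ContextFreeGrammar Q)

lemma upMstr_cons (s : Symbol Q (UpNT A g₀ G)) (l : List (Symbol Q (UpNT A g₀ G))) :
    upMstr A g₀ G (s :: l) = upM A g₀ G s * upMstr A g₀ G l := by
  simp [upMstr]

lemma upMstr_base : ∀ u : List Q, u ∈ upMstr A g₀ G (u.map Symbol.terminal)
  | [] => Language.nil_mem_one
  | q :: u => by
    rw [List.map_cons, upMstr_cons]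
    simpa using Language.append_mem_mul
      (show [q] ∈ A.upM g₀ G (Symbol.terminal q) from rfl) (upMstr_base u)

/-- Evaluating lifted strings of a component grammar. -/
lemma upM_lifted (gc : ContextFreeGrammar Q) (e : gc.NT → UpNT A g₀ G)
    (he : ∀ n, upM A g₀ G (Symbol.nonterminal (e n)) =
      {u | ∃ w, gc.Derives [Symbol.nonterminal n] (w.map Symbol.terminal) ∧
        A.EvalH (u.map stLeaf) w}) :
    ∀ (sf : List (Symbol Q gc.NT)) (u : List Q),
      u ∈ upMstr A g₀ G (sf.map (liftSymbol (ntQ A g₀ G) e)) →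
      ∃ w, gc.Derives sf (w.map Symbol.terminal) ∧ A.EvalH (u.map stLeaf) w := by
  intro sf
  induction sf with
  | nil =>
    intro u hu
    have : u = [] := (Language.mem_one u).mp hu
    subst this
    exact ⟨[], ContextFreeGrammar.Derives.refl [], EvalH.empty⟩
  | cons s sf ih =>
    intro u hu
    rw [List.map_cons, upMstr_cons] at hu
    obtain ⟨u₁, hu₁, u₂, hu₂, rfl⟩ := Language.mem_mul.mp hu
    obtain ⟨w₂, d₂, e₂⟩ := ih u₂ hu₂
    have : ∃ w₁, gc.Derives [s] (w₁.map Symbol.terminal) ∧ A.EvalH (u₁.map stLeaf) w₁ := by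
      cases s with
      | terminal q =>
        have e₁ : A.EvalH (u₁.map stLeaf) [q] := hu₁
        exact ⟨[q], ContextFreeGrammar.Derives.refl _, e₁⟩
      | nonterminal n =>
        rw [show liftSymbol (ntQ A g₀ G) e (Symbol.nonterminal n)
            = Symbol.nonterminal (e n) from rfl, he n] at hu₁
        exact hu₁
    obtain ⟨w₁, d₁, e₁⟩ := this
    refine ⟨w₁ ++ w₂, ?_, ?_⟩
    · rw [List.map_append]
      exact ((d₁.append_right sf).trans (d₂.append_left (w₁.map Symbol.terminal)) :
        gc.Derives ([s] ++ sf) _)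
    · rw [List.map_append]
      exact EvalH.app e₁ e₂

lemma upGrammar_rule_sound (hG : ∀ i, (G i).language = (A.collapse.get i).1) :
    ∀ r ∈ (upGrammar A g₀ G).rules, ∀ u : List Q,
      u ∈ upMstr A g₀ G r.output → u ∈ upM A g₀ G (Symbol.nonterminal r.input) := by
  classical
  rintro (r : ContextFreeRule Q (UpNT A g₀ G)) hr
  unfold upGrammar at hr
  simp only [Finset.mem_union, Finset.mem_map, Finset.mem_biUnion,
    Function.Embedding.coeFn_mk] at hr
  rcases hr with (((⟨r₀, hr₀, rfl⟩ | ⟨q, -, rfl⟩) | ⟨i, -, rfl⟩) | ⟨i, -, r₀, hr₀, rfl⟩)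
  · intro u hu
    obtain ⟨w, d, e⟩ := upM_lifted A g₀ G g₀ Sum.inl (fun n => rfl) r₀.output u hu
    exact ⟨w, (ContextFreeGrammar.Produces.trans_derives
      ⟨r₀, hr₀, ContextFreeRule.Rewrites.input_output⟩ d), e⟩
  · intro u hu
    erw [upMstr_single] at hu
    have huq : u = [q] := hu
    subst huq
    show A.EvalH ([q].map stLeaf) [q]
    exact EvalH.leaf q
  · intro u hu
    erw [upMstr_single] at hu
    obtain ⟨w, d, e⟩ := hu
    have hwl : w ∈ (G i).language := d
    rw [hG i] at hwl
    show A.EvalH (u.map stLeaf) [(A.collapse.get i).2]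
    refine EvalH.coll (L := (A.collapse.get i).1) ?_ e hwl
    exact Prod.mk.eta ▸ List.get_mem A.collapse i
  · intro u hu
    obtain ⟨w, d, e⟩ := upM_lifted A g₀ G (G i) (fun n => Sum.inr (Sum.inr ⟨i, n⟩))
      (fun n => rfl) r₀.output u hu
    exact ⟨w, (ContextFreeGrammar.Produces.trans_derives
      ⟨r₀, hr₀, ContextFreeRule.Rewrites.input_output⟩ d), e⟩

lemma upGrammar_inv (hG : ∀ i, (G i).language = (A.collapse.get i).1)
    {x : List (Symbol Q (UpNT A g₀ G))} {u : List Q}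
    (d : (upGrammar A g₀ G).Derives x (u.map Symbol.terminal)) :
    u ∈ upMstr A g₀ G x := by
  induction d using Relation.ReflTransGen.head_induction_on with
  | refl => exact upMstr_base A g₀ G u
  | head hstep _ ih =>
    obtain ⟨r, hr, hrw⟩ := hstep
    obtain ⟨p, s, rfl, rfl⟩ := hrw.exists_parts
    erw [upMstr_append, upMstr_append] at ih ⊢
    obtain ⟨u₁₂, hu₁₂, u₃, hu₃, rfl⟩ := Language.mem_mul.mp ih
    obtain ⟨u₁, hu₁, u₂, hu₂, rfl⟩ := Language.mem_mul.mp hu₁₂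
    have hmid : u₂ ∈ upMstr A g₀ G [Symbol.nonterminal r.input] := by
      rw [upMstr_single]
      exact upGrammar_rule_sound A g₀ G hG r hr u₂ hu₂
    exact Language.append_mem_mul (Language.append_mem_mul hu₁ hmid) hu₃

lemma upGrammar_language {L : Language Q} (hg₀ : g₀.language = L)
    (hG : ∀ i, (G i).language = (A.collapse.get i).1) :
    (upGrammar A g₀ G).language = A.up L := by
  ext u
  constructor
  · intro hu
    have d : (upGrammar A g₀ G).Derives
        [Symbol.nonterminal (Sum.inl g₀.initial)] (u.map Symbol.terminal) := hu
    have hm := upGrammar_inv A g₀ G hG d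
    erw [upMstr_single] at hm
    obtain ⟨w, d₀, e⟩ := hm
    exact ⟨w, hg₀ ▸ (d₀ : w ∈ g₀.language), e⟩
  · exact up_mem_upGrammar A g₀ G hg₀ hG

end UpGrammar3

/-- The collapse closure of a context-free language is context-free. -/
lemma up_isContextFree' {α Q : Type} (A : ECFHA α Q) [Fintype Q] {L : Language Q}
    (hL : L.IsContextFree) : (A.up L).IsContextFree := by
  obtain ⟨g₀, hg₀⟩ := hL
  have hcf : ∀ i : Fin A.collapse.length, ((A.collapse.get i).1).IsContextFree :=
    fun i => A.cfCollapse _ (List.get_mem A.collapse i)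
  choose G hG using hcf
  exact ⟨upGrammar A g₀ G, upGrammar_language A g₀ G hg₀ hG⟩

end ECFHA

namespace ECFHA

variable {α Q : Type} {A : ECFHA α Q}

lemma moves_iff_evalH {h : List (UTerm (α ⊕ Q))} {w : List Q} :
    Relation.ReflTransGen A.Move h (w.map stLeaf) ↔ A.EvalH h w := by
  constructor
  · intro hmoves
    induction hmoves using Relation.ReflTransGen.head_induction_on with
    | refl => exact evalH_refl w
    | head hstep _ ih => exact hstep.evalH w ih
  · exact EvalH.toMoves

lemma termLang_iff (A : ECFHA α Q) (t : UTerm α) :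
    t ∈ A.termLang ↔ ∃ q ∈ A.final, A.EvalH [embedT t] [q] := by
  unfold termLang
  constructor
  · rintro ⟨q, hq, hmoves⟩
    exact ⟨q, hq, (moves_iff_evalH (w := [q])).mp hmoves⟩
  · rintro ⟨q, hq, hev⟩
    exact ⟨q, hq, (moves_iff_evalH (w := [q])).mpr hev⟩

/-- The collapse closure of a context-free language is context-free. -/
lemma up_isContextFree (A : ECFHA α Q) [Fintype Q] {L : Language Q}
    (hL : L.IsContextFree) : (A.up L).IsContextFree :=
  up_isContextFree' A hL

/-- The collapse-free automaton associated to `A`. -/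
noncomputable def decollapse (A : ECFHA α Q) [Fintype Q] : ECFHA α Q where
  final := { q' | ∃ q ∈ A.final, A.EvalH [stLeaf q'] [q] }
  trans := A.trans.map (fun r => (r.1, A.up r.2.1, r.2.2))
  collapse := []
  cf := by
    intro r hr
    rw [List.mem_map] at hr
    obtain ⟨r₀, hr₀, rfl⟩ := hr
    exact A.up_isContextFree (A.cf r₀ hr₀)
  cfCollapse := by simp

lemma decollapse_length [Fintype Q] {h : List (UTerm (α ⊕ Q))} {w : List Q}
    (hw : (A.decollapse).EvalH h w) : w.length = h.length := by
  induction hw with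
  | empty => rfl
  | leaf q => rfl
  | app _ _ ih₁ ih₂ => simp [ih₁, ih₂]
  | node _ _ _ _ => rfl
  | coll hmem _ _ _ => simp [decollapse] at hmem

/-- Any evaluation of the collapse-free automaton is an evaluation of `A`. -/
lemma decollapse_sound [Fintype Q] {h : List (UTerm (α ⊕ Q))} {w : List Q}
    (hw : (A.decollapse).EvalH h w) : A.EvalH h w := by
  induction hw with
  | empty => exact EvalH.empty
  | leaf q => exact EvalH.leaf q
  | app _ _ ih₁ ih₂ => exact EvalH.app ih₁ ih₂
  | node hmem _ hL ih =>
    rw [show (A.decollapse).trans = A.trans.map (fun r => (r.1, A.up r.2.1, r.2.2)) from rfl,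
      List.mem_map] at hmem
    obtain ⟨⟨a₀, L₀, q₀⟩, hr₀, heq⟩ := hmem
    injection heq with h1 h23
    injection h23 with h2 h3
    subst h1
    subst h2
    subst h3
    obtain ⟨w', hw'L, hw'⟩ := hL
    exact EvalH.node hr₀ (hw'.comp _ _ rfl ih) hw'L
  | coll hmem _ _ _ => simp [decollapse] at hmem

/-- Any evaluation of `A` factors through the collapse-free automaton. -/
lemma decollapse_complete [Fintype Q] {h : List (UTerm (α ⊕ Q))} {w : List Q}
    (hw : A.EvalH h w) :
    ∃ u, (A.decollapse).EvalH h u ∧ A.EvalH (u.map stLeaf) w := by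
  induction hw with
  | empty => exact ⟨[], EvalH.empty, EvalH.empty⟩
  | leaf q => exact ⟨[q], EvalH.leaf q, EvalH.leaf q⟩
  | app _ _ ih₁ ih₂ =>
    obtain ⟨u₁, hu₁, hc₁⟩ := ih₁
    obtain ⟨u₂, hu₂, hc₂⟩ := ih₂
    exact ⟨u₁ ++ u₂, EvalH.app hu₁ hu₂, by
      rw [List.map_append]; exact EvalH.app hc₁ hc₂⟩
  | node hmem hw hL ih =>
    rename_i a L q hh ww
    obtain ⟨u₀, hu₀, hc₀⟩ := ih
    refine ⟨[q], ?_, EvalH.leaf q⟩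
    refine EvalH.node (a := a) (L := A.up L) (q := q) ?_ hu₀ ⟨ww, hL, hc₀⟩
    rw [show (A.decollapse).trans = A.trans.map (fun r => (r.1, A.up r.2.1, r.2.2)) from rfl,
      List.mem_map]
    exact ⟨(a, L, q), hmem, rfl⟩
  | coll hmem hw hL ih =>
    obtain ⟨u, hu, hc⟩ := ih
    exact ⟨u, hu, EvalH.coll hmem hc hL⟩

lemma decollapse_termLang [Fintype Q] (A : ECFHA α Q) :
    (A.decollapse).termLang = A.termLang := by
  ext t
  rw [termLang_iff, termLang_iff]
  constructor
  · rintro ⟨q', ⟨q, hqf, hq'q⟩, hev⟩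
    exact ⟨q, hqf, hq'q.comp _ [q'] rfl (decollapse_sound hev)⟩
  · rintro ⟨q, hqf, hev⟩
    obtain ⟨u, hu, hc⟩ := decollapse_complete hev
    have hlen : u.length = 1 := by simpa using decollapse_length hu
    obtain ⟨q', rfl⟩ : ∃ q', u = [q'] := by
      match u, hlen with
      | [q'], _ => exact ⟨q', rfl⟩
    exact ⟨q', ⟨q, hqf, hc⟩, hu⟩

end ECFHA


/-- for every extended CF-HA with collapsing transitions there is
a CF-HA without collapsing transitions accepting exactly the same terms. -/
theorem ecfha_collapse_elimination {α : Type} [Fintype α] {Q : Type} [Fintype Q]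
    (A : ECFHA α Q) :
    ∃ (Q' : Type) (_ : Fintype Q') (A' : ECFHA α Q'),
      A'.collapse = [] ∧ A'.termLang = A.termLang := by
  exact ⟨Q, inferInstance, A.decollapse, rfl, A.decollapse_termLang⟩
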